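/- (Exponential Taylor inequality.) For every ε > 0 and all p, q, S ∈ ℝ³: | e^{-ε|p|²/4} e^{-ε|q|²/4} ( 1 − e^{-ε|S|²/2} e^{ε (p·S)/2} ) | ≤ (ε/2) ( |S|² + |p| |S| ). -/

import Mathlib

open Real

noncomputable section

abbrev E3 := EuclideanSpace ℝ (Fin 3)

/-- **Exponential Taylor inequality** (equations (6.15)–(6.16)): for all `ε > 0` and
`p, q, S ∈ ℝ³`,
`|e^{-ε|p|²/4} e^{-ε|q|²/4} (1 − e^{-ε|S|²/2} e^{ε p·S/2})| ≤ (ε/2)(|S|² + |p||S|)`. -/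
theorem exp_taylor_inequality (ε : ℝ) (hε : 0 < ε) (p q S : E3) :
    |Real.exp (-(ε * ‖p‖ ^ 2) / 4) * Real.exp (-(ε * ‖q‖ ^ 2) / 4) *
        (1 - Real.exp (-(ε * ‖S‖ ^ 2) / 2) * Real.exp (ε * (inner ℝ p S : ℝ) / 2))| ≤
      ε / 2 * (‖S‖ ^ 2 + ‖p‖ * ‖S‖) := by
  have hinner : |(inner ℝ p S : ℝ)| ≤ ‖p‖ * ‖S‖ := abs_real_inner_le_norm p S
  obtain ⟨hi1, hi2⟩ := abs_le.mp hinner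
  have hS := norm_nonneg S
  have hP := norm_nonneg p
  set A : ℝ := Real.exp (-(ε * ‖p‖ ^ 2) / 4) * Real.exp (-(ε * ‖q‖ ^ 2) / 4) with hA
  set x : ℝ := -(ε * ‖S‖ ^ 2) / 2 + ε * (inner ℝ p S : ℝ) / 2 with hx
  have hprod : Real.exp (-(ε * ‖S‖ ^ 2) / 2) * Real.exp (ε * (inner ℝ p S : ℝ) / 2)
      = Real.exp x := by rw [← Real.exp_add]
  rw [hprod]
  have hApos : 0 < A := mul_pos (Real.exp_pos _) (Real.exp_pos _)
  have hA1 : A ≤ 1 := by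
    rw [hA, ← Real.exp_add, Real.exp_le_one_iff]
    nlinarith [sq_nonneg ‖p‖, sq_nonneg ‖q‖]
  have hAex : A * Real.exp x ≤ 1 := by
    rw [hA, ← Real.exp_add, ← Real.exp_add, Real.exp_le_one_iff]
    nlinarith [sq_nonneg (‖p‖ - ‖S‖), sq_nonneg ‖q‖, sq_nonneg ‖S‖]
  have hxb : |x| ≤ ε / 2 * (‖S‖ ^ 2 + ‖p‖ * ‖S‖) := by
    rw [abs_le]
    constructor <;> [nlinarith [sq_nonneg ‖S‖]; nlinarith [sq_nonneg ‖S‖]]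
  rcases le_or_gt x 0 with hxle | hxgt
  · have h1 : Real.exp x ≤ 1 := Real.exp_le_one_iff.mpr hxle
    have h2 : 1 - Real.exp x ≤ -x := by
      have := Real.add_one_le_exp x; linarith
    have : |A * (1 - Real.exp x)| = A * (1 - Real.exp x) := by
      apply abs_of_nonneg
      exact mul_nonneg hApos.le (by linarith)
    rw [this]
    have : A * (1 - Real.exp x) ≤ 1 * (-x) :=
      mul_le_mul hA1 h2 (by linarith) zero_le_one
    have habs : -x ≤ |x| := neg_le_abs x
    linarith
  · have h1 : 1 ≤ Real.exp x := Real.one_le_exp hxgt.le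
    have heq : A * (1 - Real.exp x) = -((A * Real.exp x) * (1 - Real.exp (-x))) := by
      rw [Real.exp_neg]
      field_simp
      ring
    have h2 : 1 - Real.exp (-x) ≤ x := by
      have := Real.add_one_le_exp (-x); linarith
    have h3 : 0 ≤ 1 - Real.exp (-x) := by
      have : Real.exp (-x) ≤ 1 := Real.exp_le_one_iff.mpr (by linarith)
      linarith
    have h4 : (A * Real.exp x) * (1 - Real.exp (-x)) ≤ 1 * x :=
      mul_le_mul hAex h2 h3 zero_le_one
    have h5 : 0 ≤ (A * Real.exp x) * (1 - Real.exp (-x)) :=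
      mul_nonneg (mul_pos hApos (Real.exp_pos x)).le h3
    rw [heq, abs_neg, abs_of_nonneg h5]
    have habs : x ≤ |x| := le_abs_self x
    linarith

end
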